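/- For ε ∈ {1,-1}, δ ∈ {1,-1} and real constants c1, c2, the function u(t,x) = c1 - ε(x + εt) + 4δc2·e^{-(x+εt)/2} + ε c2²·e^{-(x+εt)} satisfies the PDE u_t + (u_x + u_xx)^2 = 0. -/

import Mathlib

theorem stmt1 (ε δ c1 c2 : ℝ)
    (hε : ε = 1 ∨ ε = -1)
    (hδ : δ = 1 ∨ δ = -1)
    (u : ℝ → ℝ → ℝ)
    (hu : ∀ t x : ℝ, u t x = c1 - ε * (x + ε * t) + 4 * δ * c2 * Real.exp (-(x + ε * t) / 2) + ε * c2 ^ 2 * Real.exp (-(x + ε * t))) :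
    ∀ t x : ℝ,
      deriv (fun s => u s x) t
      + (deriv (fun y => u t y) x
         + deriv (fun y => deriv (fun z => u t z) y) x) ^ 2 = 0 := by
  intro t x
  have hε2 : ε ^ 2 = 1 := by rcases hε with h | h <;> rw [h] <;> norm_num
  have hδ2 : δ ^ 2 = 1 := by rcases hδ with h | h <;> rw [h] <;> norm_num
  -- spatial derivative as a HasDerivAt, for any t, y
  have hx : ∀ (t y : ℝ), HasDerivAt (fun z => u t z)
      (-ε - 2 * δ * c2 * Real.exp (-(y + ε * t) / 2)
        - ε * c2 ^ 2 * Real.exp (-(y + ε * t))) y := by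
    intro t y
    have h1 : HasDerivAt (fun z : ℝ => -(z + ε * t) / 2) (-1 / 2) y := by
      simpa using (((hasDerivAt_id y).add_const (ε * t)).neg.div_const 2)
    have h1' : HasDerivAt (fun z : ℝ => -(z + ε * t)) (-1) y := by
      exact ((hasDerivAt_id y).add_const (ε * t)).neg
    have h2 := h1.exp
    have h3 := h1'.exp
    have := ((((hasDerivAt_const y c1).sub
        (((hasDerivAt_id y).add_const (ε * t)).const_mul ε)).add
        (h2.const_mul (4 * δ * c2))).add (h3.const_mul (ε * c2 ^ 2)))
    have heq : (fun z => u t z) = fun z => c1 - ε * (z + ε * t)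
        + 4 * δ * c2 * Real.exp (-(z + ε * t) / 2)
        + ε * c2 ^ 2 * Real.exp (-(z + ε * t)) := funext fun z => hu t z
    rw [heq]
    exact this.congr_deriv (by ring)
  -- time derivative
  have ht : HasDerivAt (fun s => u s x)
      (-1 - 2 * ε * δ * c2 * Real.exp (-(x + ε * t) / 2)
        - c2 ^ 2 * Real.exp (-(x + ε * t))) t := by
    have h1 : HasDerivAt (fun s : ℝ => -(x + ε * s) / 2) (-ε / 2) t := by
      simpa using ((((hasDerivAt_id t).const_mul ε).const_add x).neg.div_const 2)
    have h1' : HasDerivAt (fun s : ℝ => -(x + ε * s)) (-ε) t := by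
      exact (((hasDerivAt_id t).const_mul ε).const_add x).neg.congr_deriv (by ring)
    have h2 := h1.exp
    have h3 := h1'.exp
    have := ((((hasDerivAt_const t c1).sub
        ((((hasDerivAt_id t).const_mul ε).const_add x).const_mul ε)).add
        (h2.const_mul (4 * δ * c2))).add (h3.const_mul (ε * c2 ^ 2)))
    have heq : (fun s => u s x) = fun s => c1 - ε * (x + ε * s)
        + 4 * δ * c2 * Real.exp (-(x + ε * s) / 2)
        + ε * c2 ^ 2 * Real.exp (-(x + ε * s)) := funext fun s => hu s x
    rw [heq]
    exact this.congr_deriv (by linear_combination (-1 - c2 ^ 2 * Real.exp (-(x + ε * t))) * hε2)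
  -- the first spatial derivative as a function
  have hdx : (fun y => deriv (fun z => u t z) y)
      = fun y => -ε - 2 * δ * c2 * Real.exp (-(y + ε * t) / 2)
        - ε * c2 ^ 2 * Real.exp (-(y + ε * t)) :=
    funext fun y => (hx t y).deriv
  -- second spatial derivative
  have hxx : HasDerivAt (fun y => -ε - 2 * δ * c2 * Real.exp (-(y + ε * t) / 2)
        - ε * c2 ^ 2 * Real.exp (-(y + ε * t)))
      (δ * c2 * Real.exp (-(x + ε * t) / 2) + ε * c2 ^ 2 * Real.exp (-(x + ε * t))) x := by
    have h1 : HasDerivAt (fun z : ℝ => -(z + ε * t) / 2) (-1 / 2) x := by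
      simpa using (((hasDerivAt_id x).add_const (ε * t)).neg.div_const 2)
    have h1' : HasDerivAt (fun z : ℝ => -(z + ε * t)) (-1) x := by
      exact ((hasDerivAt_id x).add_const (ε * t)).neg
    have := ((hasDerivAt_const x (-ε)).sub (h1.exp.const_mul (2 * δ * c2))).sub
        (h1'.exp.const_mul (ε * c2 ^ 2))
    exact this.congr_deriv (by ring)
  rw [ht.deriv, (hx t x).deriv, hdx, hxx.deriv]
  have hE : Real.exp (-(x + ε * t) / 2) ^ 2 = Real.exp (-(x + ε * t)) := by
    rw [sq, ← Real.exp_add]; ring_nf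
  linear_combination hε2 + c2 ^ 2 * δ ^ 2 * hE + c2 ^ 2 * Real.exp (-(x + ε * t)) * hδ2
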